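/- Let V be a well-clusterable data matrix: there exist centroids c₁,…,c_k, constants β > 0, λ ∈ [0,1], η with ‖v_i‖² ≤ η for all rows, such that at least λN rows satisfy d(v_i, c_{ℓ(v_i)}) ≤ β (where c_{ℓ(v_i)} is the nearest centroid) and all rows satisfy d(v_i, c_{ℓ(v_i)})² ≤ 4η. Let W be the N×d matrix whose i-th row is c_{ℓ(v_i)}, and let V_k be the best rank-k approximation of V in Frobenius norm. Then ‖V − V_k‖_F² ≤ (λβ² + (1−λ)4η)·‖V‖_F², provided all rows of V have norm at least 1. -/
import Mathlib


open scoped BigOperators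

/-- Well-clusterable datasets have a good rank-`k` approximation:
if at least `λN` rows are within distance `β` of their nearest centroid,
all rows are within squared distance `4η`, and all rows have norm at least 1,
then the best rank-`k` approximation `Vk` of `V` satisfies
`‖V − Vk‖_F² ≤ (λβ² + (1−λ)4η)·‖V‖_F²`. -/
theorem well_clusterable_low_rank_approx
    (N d k : ℕ) (V Vk : Matrix (Fin N) (Fin d) ℝ)
    (c : Fin k → Fin d → ℝ) (ℓ : Fin N → Fin k)
    (β η lam : ℝ) (hβ : 0 < β) (hlam0 : 0 ≤ lam) (hlam1 : lam ≤ 1)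
    -- `c (ℓ i)` is the centroid nearest to row `i`
    (hnear : ∀ i m, ∑ j, (V i j - c (ℓ i) j) ^ 2 ≤ ∑ j, (V i j - c m j) ^ 2)
    -- at least `λN` rows are `β`-close to their nearest centroid
    (S : Finset (Fin N)) (hScard : lam * N ≤ S.card)
    (hS : ∀ i ∈ S, ∑ j, (V i j - c (ℓ i) j) ^ 2 ≤ β ^ 2)
    -- all rows are within squared distance `4η` of their nearest centroid
    (hall : ∀ i, ∑ j, (V i j - c (ℓ i) j) ^ 2 ≤ 4 * η)
    -- all rows have ℓ₂ norm at least 1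
    (hrows : ∀ i, 1 ≤ ∑ j, (V i j) ^ 2)
    -- `Vk` is an optimal rank-`k` approximation of `V` in Frobenius norm
    (hVk_rank : Vk.rank ≤ k)
    (hVk_opt : ∀ B : Matrix (Fin N) (Fin d) ℝ, B.rank ≤ k →
      ∑ i, ∑ j, (V i j - Vk i j) ^ 2 ≤ ∑ i, ∑ j, (V i j - B i j) ^ 2) :
    ∑ i, ∑ j, (V i j - Vk i j) ^ 2 ≤
      (lam * β ^ 2 + (1 - lam) * (4 * η)) * (∑ i, ∑ j, (V i j) ^ 2) := by
  rcases Nat.eq_zero_or_pos N with hN | hN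
  · subst hN; simp
  -- The centroid matrix W
  set W : Matrix (Fin N) (Fin d) ℝ := Matrix.of fun i j => c (ℓ i) j with hW
  have hWrank : W.rank ≤ k := by
    have hfac : W = (Matrix.of fun i m => if m = ℓ i then (1:ℝ) else 0) * Matrix.of c := by
      ext i j
      simp [Matrix.mul_apply, hW]
    rw [hfac]
    refine le_trans (Matrix.rank_mul_le_right _ _) ?_
    simpa using Matrix.rank_le_card_height (Matrix.of c)
  have hopt := hVk_opt W hWrank
  refine hopt.trans ?_
  -- basic facts
  have hη : 0 ≤ 4 * η := by
    have i0 : Fin N := ⟨0, hN⟩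
    have h1 := hall i0
    have h2 : (0:ℝ) ≤ ∑ j, (V i0 j - c (ℓ i0) j) ^ 2 :=
      Finset.sum_nonneg fun j _ => sq_nonneg _
    linarith
  set m : ℝ := min (β ^ 2) (4 * η) with hm
  have hm1 : m ≤ β ^ 2 := min_le_left _ _
  have hm2 : m ≤ 4 * η := min_le_right _ _
  have hDS : ∀ i ∈ S, ∑ j, (V i j - W i j) ^ 2 ≤ m :=
    fun i hi => le_min (hS i hi) (hall i)
  have hDall : ∀ i, ∑ j, (V i j - W i j) ^ 2 ≤ 4 * η := fun i => hall i
  have hsplit : ∑ i, ∑ j, (V i j - W i j) ^ 2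
      = ∑ i ∈ S, (∑ j, (V i j - W i j) ^ 2) + ∑ i ∈ Sᶜ, (∑ j, (V i j - W i j) ^ 2) :=
    (Finset.sum_add_sum_compl S _).symm
  have h1 : ∑ i ∈ S, (∑ j, (V i j - W i j) ^ 2) ≤ S.card * m := by
    have := Finset.sum_le_card_nsmul S _ m hDS
    simpa [nsmul_eq_mul] using this
  have h2 : ∑ i ∈ Sᶜ, (∑ j, (V i j - W i j) ^ 2) ≤ Sᶜ.card * (4 * η) := by
    have := Finset.sum_le_card_nsmul Sᶜ _ (4 * η) (fun i _ => hDall i)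
    simpa [nsmul_eq_mul] using this
  have hcards : (Sᶜ.card : ℝ) = (N : ℝ) - S.card := by
    have h := Finset.card_add_card_compl S
    rw [Fintype.card_fin] at h
    have : (S.card : ℝ) + Sᶜ.card = N := by exact_mod_cast h
    linarith
  have hsN : (S.card : ℝ) ≤ N := by
    exact_mod_cast Finset.card_le_card (Finset.subset_univ S) |>.trans_eq (Finset.card_fin N)
  -- combine: total ≤ lam*N*β² + (1-lam)*N*4η
  have hK : ∑ i, ∑ j, (V i j - W i j) ^ 2
      ≤ (lam * β ^ 2 + (1 - lam) * (4 * η)) * N := by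
    rw [hsplit]
    have key : (S.card : ℝ) * m + ((N : ℝ) - S.card) * (4 * η)
        ≤ (lam * β ^ 2 + (1 - lam) * (4 * η)) * N := by
      have e1 : (0:ℝ) ≤ ((S.card : ℝ) - lam * N) * (4 * η - m) :=
        mul_nonneg (by linarith) (by linarith)
      have e2 : (0:ℝ) ≤ lam * N * (β ^ 2 - m) :=
        mul_nonneg (mul_nonneg hlam0 (Nat.cast_nonneg N)) (by linarith)
      nlinarith []
    calc ∑ i ∈ S, (∑ j, (V i j - W i j) ^ 2) + ∑ i ∈ Sᶜ, (∑ j, (V i j - W i j) ^ 2)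
        ≤ S.card * m + ((N : ℝ) - S.card) * (4 * η) := by rw [← hcards]; exact add_le_add h1 h2
      _ ≤ _ := key
  refine hK.trans ?_
  have hNF : (N : ℝ) ≤ ∑ i, ∑ j, (V i j) ^ 2 := by
    calc (N : ℝ) = ∑ _i : Fin N, (1 : ℝ) := by simp
      _ ≤ ∑ i, ∑ j, (V i j) ^ 2 := Finset.sum_le_sum fun i _ => hrows i
  have hKpos : 0 ≤ lam * β ^ 2 + (1 - lam) * (4 * η) := by
    nlinarith [sq_nonneg β]
  exact mul_le_mul_of_nonneg_left hNF hKpos
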